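/- Let B_m ∈ M(m, ℂ) and fix target eigenvalues λ_1, ..., λ_{m+1} with δ := Σλ_i - tr(B_m). Suppose b ∈ ℂ^m is such that the pair (B_m, bᵀ) is observable (b, B_mᵀb, ..., (B_mᵀ)^{m-1}b linearly independent). Then there is at most one c ∈ ℂ^m such that the matrix [[B_m, c],[bᵀ, δ]] has characteristic polynomial ∏_{i=1}^{m+1}(λ - λ_i). Specifically, c is determined by the linear system bᵀB_m^{k-1}c = g_k (k = 1,...,m), where the g_k are the coefficients in the expansion λ - δ - P_{m+1}(λ)/P_m(λ) = Σ_{k≥1} g_k λ^{-k}. -/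

import Mathlib

open Matrix Polynomial Finset

private lemma charmatrix_map_eval {n : Type*} [DecidableEq n] [Fintype n]
    (M : Matrix n n ℂ) (t : ℂ) :
    (charmatrix M).map (evalRingHom t) = t • (1 : Matrix n n ℂ) - M := by
  ext i j
  by_cases h : i = j <;>
    simp [charmatrix_apply, h, Matrix.one_apply, Matrix.sub_apply, Matrix.smul_apply]

private lemma eval_charpoly' {n : Type*} [DecidableEq n] [Fintype n]
    (M : Matrix n n ℂ) (t : ℂ) :
    (M.charpoly).eval t = (t • (1 : Matrix n n ℂ) - M).det := by
  have h := RingHom.map_det (evalRingHom t) (charmatrix M)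
  rw [RingHom.mapMatrix_apply, charmatrix_map_eval] at h
  simpa [Matrix.charpoly] using h

private lemma block_eval {m : ℕ} (Bm : Matrix (Fin m) (Fin m) ℂ) (b c : Fin m → ℂ)
    (δ t : ℂ) [Invertible (t • (1 : Matrix (Fin m) (Fin m) ℂ) - Bm)] :
    ((Matrix.fromBlocks Bm (Matrix.of fun i (_ : Unit) => c i)
        (Matrix.of fun (_ : Unit) j => b j)
        (Matrix.of fun (_ : Unit) (_ : Unit) => δ)).charpoly).eval t =
      (t • (1 : Matrix (Fin m) (Fin m) ℂ) - Bm).det *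
        ((t - δ) - b ⬝ᵥ (⅟(t • (1 : Matrix (Fin m) (Fin m) ℂ) - Bm) *ᵥ c)) := by
  rw [eval_charpoly']
  have hb : t • (1 : Matrix (Fin m ⊕ Unit) (Fin m ⊕ Unit) ℂ) -
      Matrix.fromBlocks Bm (Matrix.of fun i (_ : Unit) => c i)
        (Matrix.of fun (_ : Unit) j => b j)
        (Matrix.of fun (_ : Unit) (_ : Unit) => δ) =
      Matrix.fromBlocks (t • (1 : Matrix (Fin m) (Fin m) ℂ) - Bm)
        (Matrix.of fun i (_ : Unit) => -(c i))
        (Matrix.of fun (_ : Unit) j => -(b j))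
        (Matrix.of fun (_ : Unit) (_ : Unit) => t - δ) := by
    ext (i | i) (j | j) <;>
      simp [Matrix.one_apply, Matrix.sub_apply, Matrix.smul_apply, Matrix.fromBlocks]
  rw [hb, Matrix.det_fromBlocks₁₁]
  congr 1
  rw [Matrix.det_unique]
  simp only [Matrix.sub_apply, Matrix.of_apply, Matrix.mul_apply, Matrix.mulVec, dotProduct,
    neg_mul, mul_neg, neg_neg, Finset.sum_neg_distrib]
  simp only [Finset.sum_mul, Finset.mul_sum]
  rw [Finset.sum_comm]
  ring_nf

/-- If `(B_m, bᵀ)` is observable, then there is at most one completing column `c`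
giving the bordered matrix prescribed eigenvalues `λ_1, ..., λ_{m+1}`. -/
theorem observable_unique_completion {m : ℕ}
    (Bm : Matrix (Fin m) (Fin m) ℂ) (b : Fin m → ℂ)
    (lam : Fin (m + 1) → ℂ) (δ : ℂ)
    (hδ : δ = (∑ i, lam i) - Bm.trace)
    (hobs : LinearIndependent ℂ (fun k : Fin m => (Bmᵀ ^ (k : ℕ)) *ᵥ b)) :
    ∀ c₁ c₂ : Fin m → ℂ,
      (Matrix.fromBlocks Bm (Matrix.of fun i (_ : Unit) => c₁ i)
          (Matrix.of fun (_ : Unit) j => b j)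
          (Matrix.of fun (_ : Unit) (_ : Unit) => δ)).charpoly =
        ∏ i : Fin (m + 1), (X - C (lam i)) →
      (Matrix.fromBlocks Bm (Matrix.of fun i (_ : Unit) => c₂ i)
          (Matrix.of fun (_ : Unit) j => b j)
          (Matrix.of fun (_ : Unit) (_ : Unit) => δ)).charpoly =
        ∏ i : Fin (m + 1), (X - C (lam i)) →
      c₁ = c₂ := by
  intro c₁ c₂ h1 h2
  rcases Nat.eq_zero_or_pos m with hm | hm
  · subst hm; funext i; exact i.elim0
  haveI : Nonempty (Fin m) := ⟨⟨0, hm⟩⟩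
  set d : Fin m → ℂ := c₁ - c₂ with hd
  suffices hd0 : d = 0 by
    funext i
    have := congrFun hd0 i
    simpa [hd, sub_eq_zero] using this
  -- Step 1: the adjugate polynomial vanishes
  set q : ℂ[X] :=
    (fun i => C (b i)) ⬝ᵥ ((charmatrix Bm).adjugate *ᵥ fun j => C (d j)) with hq
  have hqev : ∀ t : ℂ,
      q.eval t = b ⬝ᵥ ((t • (1 : Matrix (Fin m) (Fin m) ℂ) - Bm).adjugate *ᵥ d) := by
    intro t
    rw [← charmatrix_map_eval, ← RingHom.mapMatrix_apply, ← RingHom.map_adjugate,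
      RingHom.mapMatrix_apply]
    simp [hq, dotProduct, Matrix.mulVec, eval_finset_sum, Matrix.map_apply]
  have hq0 : q = 0 := by
    apply Polynomial.eq_zero_of_infinite_isRoot
    have hfin : {t : ℂ | Bm.charpoly.IsRoot t}.Finite :=
      Polynomial.finite_setOf_isRoot (Matrix.charpoly_monic Bm).ne_zero
    refine Set.Infinite.mono ?_ hfin.infinite_compl
    intro t ht
    have hdet : (t • (1 : Matrix (Fin m) (Fin m) ℂ) - Bm).det ≠ 0 := by
      rw [← eval_charpoly']
      exact ht
    haveI := (t • (1 : Matrix (Fin m) (Fin m) ℂ) - Bm).invertibleOfIsUnitDet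
      (isUnit_iff_ne_zero.mpr hdet)
    have e1 := h1.trans h2.symm
    have e2 := congrArg (fun p => p.eval t) e1
    simp only [block_eval] at e2
    have e3 := mul_left_cancel₀ hdet e2
    have e4 : b ⬝ᵥ (⅟(t • (1 : Matrix (Fin m) (Fin m) ℂ) - Bm) *ᵥ d) = 0 := by
      have : b ⬝ᵥ (⅟(t • (1 : Matrix (Fin m) (Fin m) ℂ) - Bm) *ᵥ c₁) =
          b ⬝ᵥ (⅟(t • (1 : Matrix (Fin m) (Fin m) ℂ) - Bm) *ᵥ c₂) := by
        exact sub_right_injective e3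
      rw [hd, Matrix.mulVec_sub, dotProduct_sub, sub_eq_zero]
      exact this
    show q.IsRoot t
    rw [Polynomial.IsRoot, hqev t]
    have hio : ⅟(t • (1 : Matrix (Fin m) (Fin m) ℂ) - Bm) =
        Ring.inverse ((t • (1 : Matrix (Fin m) (Fin m) ℂ) - Bm).det) •
          (t • (1 : Matrix (Fin m) (Fin m) ℂ) - Bm).adjugate := by
      rw [invOf_eq_nonsing_inv, Matrix.inv_def]
    rw [hio, Matrix.smul_mulVec, dotProduct_smul] at e4
    rw [Ring.inverse_eq_inv'] at e4
    rcases mul_eq_zero.mp e4 with h | h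
    · exact absurd (inv_eq_zero.mp h) hdet
    · exact h
  -- Step 2: coefficient identities
  set P : Polynomial (Matrix (Fin m) (Fin m) ℂ) := matPolyEquiv (charmatrix Bm).adjugate with hP
  have hcoeff : ∀ k, b ⬝ᵥ (P.coeff k *ᵥ d) = 0 := by
    intro k
    have h := congrArg (fun p => p.coeff k) hq0
    simp only [hq, coeff_zero, dotProduct, Matrix.mulVec, finset_sum_coeff, coeff_C_mul,
      coeff_mul_C, Polynomial.coeff_mul_C] at h
    simp only [dotProduct, Matrix.mulVec, hP, matPolyEquiv_coeff_apply]
    exact h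
  have hid : (X - Polynomial.C Bm) * P =
      (Bm.charpoly).map (algebraMap ℂ (Matrix (Fin m) (Fin m) ℂ)) := by
    have h := Matrix.mul_adjugate (charmatrix Bm)
    apply_fun matPolyEquiv at h
    rwa [_root_.map_mul, matPolyEquiv_charmatrix, ← Matrix.charpoly, matPolyEquiv_smul_one] at h
  have hmono : ((Bm.charpoly).map (algebraMap ℂ (Matrix (Fin m) (Fin m) ℂ))).Monic :=
    (Matrix.charpoly_monic Bm).map _
  have hdegmap : ((Bm.charpoly).map (algebraMap ℂ (Matrix (Fin m) (Fin m) ℂ))).natDegree = m := by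
    rw [(Matrix.charpoly_monic Bm).natDegree_map, Matrix.charpoly_natDegree_eq_dim,
      Fintype.card_fin]
  have hPne : P ≠ 0 := by
    intro h0
    rw [h0, mul_zero] at hid
    exact hmono.ne_zero hid.symm
  have hdeg : P.natDegree = m - 1 := by
    have hlc : (X - Polynomial.C Bm).leadingCoeff * P.leadingCoeff ≠ 0 := by
      rw [(monic_X_sub_C Bm).leadingCoeff, one_mul]
      exact leadingCoeff_ne_zero.mpr hPne
    have h := Polynomial.natDegree_mul' hlc
    rw [hid, hdegmap, natDegree_X_sub_C] at h
    omega
  have hvanish : ∀ k, m ≤ k → P.coeff k = 0 := fun k hk =>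
    Polynomial.coeff_eq_zero_of_natDegree_lt (by omega)
  have hcm : (Bm.charpoly).coeff m = 1 := by
    have h := (Matrix.charpoly_monic Bm).coeff_natDegree
    rwa [Matrix.charpoly_natDegree_eq_dim, Fintype.card_fin] at h
  have hrec : ∀ k, P.coeff k = Bm * P.coeff (k + 1) +
      ((Bm.charpoly).coeff (k + 1)) • (1 : Matrix (Fin m) (Fin m) ℂ) := by
    intro k
    have h := congrArg (fun p => p.coeff (k + 1)) hid
    simp only [sub_mul, coeff_sub, coeff_X_mul, coeff_C_mul, coeff_map] at h
    rw [Algebra.algebraMap_eq_smul_one] at h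
    rw [eq_add_of_sub_eq h]
    exact add_comm _ _
  have hform : ∀ j, j < m → P.coeff (m - 1 - j) =
      ∑ i ∈ Finset.range (j + 1), ((Bm.charpoly).coeff (m - j + i)) • Bm ^ i := by
    intro j
    induction j with
    | zero =>
      intro _
      simp only [Nat.sub_zero]
      rw [hrec (m - 1), show m - 1 + 1 = m by omega, hvanish m le_rfl, mul_zero, zero_add]
      simp [hcm]
    | succ j ih =>
      intro hj
      have e1 : ∑ i ∈ Finset.range (j + 1), Bm * (((Bm.charpoly).coeff (m - j + i)) • Bm ^ i)
          = ∑ i ∈ Finset.range (j + 1),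
              ((Bm.charpoly).coeff (m - (j + 1) + (i + 1))) • Bm ^ (i + 1) :=
        Finset.sum_congr rfl fun i hi => by
          rw [mul_smul_comm, ← pow_succ', show m - (j + 1) + (i + 1) = m - j + i by omega]
      rw [hrec (m - 1 - (j + 1)), show m - 1 - (j + 1) + 1 = m - 1 - j by omega,
        ih (by omega), Finset.mul_sum, e1]
      conv_rhs => rw [Finset.sum_range_succ']
      rw [pow_zero, Nat.add_zero, show m - (j + 1) = m - 1 - j by omega]
      norm_num
  -- Step 3: observability
  let φ : Matrix (Fin m) (Fin m) ℂ →ₗ[ℂ] ℂ :=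
    { toFun := fun N => b ⬝ᵥ (N *ᵥ d)
      map_add' := fun N₁ N₂ => by simp [Matrix.add_mulVec, dotProduct_add]
      map_smul' := fun a N => by simp [Matrix.smul_mulVec, dotProduct_smul] }
  have hpow : ∀ j, j < m → b ⬝ᵥ (Bm ^ j *ᵥ d) = 0 := by
    intro j
    induction j using Nat.strong_induction_on with
    | _ j ih =>
      intro hj
      have h := hcoeff (m - 1 - j)
      rw [hform j hj] at h
      have h2' : ∑ i ∈ Finset.range (j + 1),
          ((Bm.charpoly).coeff (m - j + i)) * (b ⬝ᵥ (Bm ^ i *ᵥ d)) = 0 := by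
        rw [← h]
        show _ = φ _
        rw [map_sum]
        refine Finset.sum_congr rfl fun i hi => ?_
        rw [_root_.map_smul]
        simp [φ, smul_eq_mul]
      rw [Finset.sum_range_succ] at h2'
      have h3' : ∀ i ∈ Finset.range j,
          ((Bm.charpoly).coeff (m - j + i)) * (b ⬝ᵥ (Bm ^ i *ᵥ d)) = 0 := by
        intro i hi
        have hij := Finset.mem_range.mp hi
        rw [ih i hij (by omega), mul_zero]
      rw [Finset.sum_congr rfl h3', Finset.sum_const_zero, zero_add,
        show m - j + j = m by omega, hcm, one_mul] at h2'
      exact h2'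
  -- conclude d = 0
  let bas := basisOfLinearIndependentOfCardEqFinrank hobs (by simp)
  let ψ : (Fin m → ℂ) →ₗ[ℂ] ℂ :=
    { toFun := fun w => w ⬝ᵥ d
      map_add' := fun w₁ w₂ => by simp [add_dotProduct]
      map_smul' := fun a w => by simp [smul_dotProduct] }
  have hψ : ψ = 0 := by
    apply bas.ext
    intro i
    rw [coe_basisOfLinearIndependentOfCardEqFinrank]
    show (Bmᵀ ^ (i : ℕ) *ᵥ b) ⬝ᵥ d = (0 : (Fin m → ℂ) →ₗ[ℂ] ℂ) _
    rw [← Matrix.transpose_pow, Matrix.mulVec_transpose, ← Matrix.dotProduct_mulVec,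
      hpow i i.isLt]
    simp
  funext j
  have := congrArg (fun f => f (Pi.single j 1)) hψ
  simpa [ψ, single_dotProduct] using this
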